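/- Every set of 5 points in the plane in general position contains 4 points in convex position; that is, ES(4) = 5. -/

import Mathlib

def GenPos (S : Set (ℝ × ℝ)) : Prop :=
  ∀ a ∈ S, ∀ b ∈ S, ∀ c ∈ S, a ≠ b → a ≠ c → b ≠ c →
    ¬ Collinear ℝ ({a, b, c} : Set (ℝ × ℝ))

def ConvexPos (S : Set (ℝ × ℝ)) : Prop :=
  ∀ p ∈ S, p ∉ convexHull ℝ (S \ {p})

noncomputable def det2 (a b c : ℝ × ℝ) : ℝ :=
  (b.1 - a.1) * (c.2 - a.2) - (b.2 - a.2) * (c.1 - a.1)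

noncomputable def chi (a b c : ℝ × ℝ) : ℝ := Real.sign (det2 a b c)

def HasConvex (S : Set (ℝ × ℝ)) (k : ℕ) : Prop :=
  ∃ T ⊆ S, T.ncard = k ∧ ConvexPos T

noncomputable def ES (k : ℕ) : ℕ :=
  sInf {N : ℕ | ∀ S : Set (ℝ × ℝ), S.Finite → N ≤ S.ncard → GenPos S → HasConvex S k}


lemma det2_rot (a b c : ℝ × ℝ) : det2 a b c = det2 c a b := by unfold det2; ring
lemma det2_swap (a b c : ℝ × ℝ) : det2 b a c = - det2 a b c := by unfold det2; ring
lemma det2_aa (a b : ℝ × ℝ) : det2 a b a = 0 := by unfold det2; ring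
lemma det2_ab (a b : ℝ × ℝ) : det2 a b b = 0 := by unfold det2; ring

lemma det2_comb2 (u v : ℝ × ℝ) {s t : ℝ} (hst : s + t = 1) (x y : ℝ × ℝ) :
    det2 u v (s • x + t • y) = s * det2 u v x + t * det2 u v y := by
  have : t = 1 - s := by linarith
  subst this
  simp [det2, Prod.smul_fst, Prod.smul_snd, smul_eq_mul]
  ring

lemma det2_comb3 (u v : ℝ × ℝ) {α β γ : ℝ} (h : α + β + γ = 1) (x y z : ℝ × ℝ) :
    det2 u v (α • x + β • y + γ • z)
      = α * det2 u v x + β * det2 u v y + γ * det2 u v z := by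
  have : γ = 1 - α - β := by linarith
  subst this
  simp [det2, Prod.smul_fst, Prod.smul_snd, smul_eq_mul]
  ring

lemma collinear_of_det2 {a b c : ℝ × ℝ} (h : det2 a b c = 0) :
    Collinear ℝ ({a, b, c} : Set (ℝ × ℝ)) := by
  by_cases hab : a = b
  · subst hab
    have : ({a, a, c} : Set (ℝ × ℝ)) = {a, c} := by simp
    rw [this]
    exact collinear_pair ℝ a c
  rw [collinear_iff_of_mem (Set.mem_insert a _)]
  refine ⟨b - a, ?_⟩
  intro p hp
  rcases hp with rfl | rfl | rfl
  · exact ⟨0, by simp⟩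
  · exact ⟨1, by simp⟩
  · unfold det2 at h
    by_cases h1 : b.1 - a.1 ≠ 0
    · refine ⟨(p.1 - a.1) / (b.1 - a.1), ?_⟩
      have h2 : (b.1 - a.1) * (p.2 - a.2) = (b.2 - a.2) * (p.1 - a.1) := by linarith
      apply Prod.ext
      · simp [vadd_eq_add, Prod.smul_fst, Prod.fst_sub]
        field_simp
        ring
      · simp [vadd_eq_add, Prod.smul_snd, Prod.snd_sub]
        field_simp
        linarith [h2]
    · push_neg at h1
      have h2 : b.2 - a.2 ≠ 0 := by
        intro h3
        apply hab
        apply Prod.ext <;> [linarith; linarith]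
      refine ⟨(p.2 - a.2) / (b.2 - a.2), ?_⟩
      have h4 : (b.2 - a.2) * (p.1 - a.1) = 0 := by
        rw [h1] at h; linarith
      have h5 : p.1 - a.1 = 0 := by
        rcases mul_eq_zero.1 h4 with h' | h'
        · exact absurd h' h2
        · exact h'
      apply Prod.ext
      · simp [vadd_eq_add, Prod.smul_fst, Prod.fst_sub]
        rw [h1]
        simp
        linarith
      · simp [vadd_eq_add, Prod.smul_snd, Prod.snd_sub]
        field_simp
        ring

lemma det2_of_collinear {a b c : ℝ × ℝ} (h : Collinear ℝ ({a, b, c} : Set (ℝ × ℝ))) :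
    det2 a b c = 0 := by
  rw [collinear_iff_of_mem (Set.mem_insert a _)] at h
  obtain ⟨v, hv⟩ := h
  obtain ⟨rb, hb⟩ := hv b (by simp)
  obtain ⟨rc, hc⟩ := hv c (by simp)
  have hb1 : b.1 = rb * v.1 + a.1 := by rw [hb]; simp [vadd_eq_add, Prod.smul_fst]
  have hb2 : b.2 = rb * v.2 + a.2 := by rw [hb]; simp [vadd_eq_add, Prod.smul_snd]
  have hc1 : c.1 = rc * v.1 + a.1 := by rw [hc]; simp [vadd_eq_add, Prod.smul_fst]
  have hc2 : c.2 = rc * v.2 + a.2 := by rw [hc]; simp [vadd_eq_add, Prod.smul_snd]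
  unfold det2
  rw [hb1, hb2, hc1, hc2]
  ring

lemma mem_hull3 {p q r x : ℝ × ℝ} (hx : x ∈ convexHull ℝ ({p, q, r} : Set (ℝ × ℝ))) :
    ∃ s t u v : ℝ, 0 ≤ s ∧ 0 ≤ t ∧ s + t = 1 ∧ 0 ≤ u ∧ 0 ≤ v ∧ u + v = 1 ∧
      x = s • p + t • (u • q + v • r) := by
  rw [convexHull_insert ⟨q, by simp⟩] at hx
  obtain ⟨y, hy, hxy⟩ := Set.mem_iUnion₂.1 hx
  obtain rfl : y = p := by simpa using hy
  obtain ⟨z, hz, hxz⟩ := Set.mem_iUnion₂.1 hxy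
  rw [convexHull_pair] at hz
  obtain ⟨u, v, hu, hv, huv, hz'⟩ := hz
  obtain ⟨s, t, hs, ht, hst, hx'⟩ := hxz
  exact ⟨s, t, u, v, hs, ht, hst, hu, hv, huv, by rw [← hx', ← hz']⟩

lemma comb_pos {u v x y : ℝ} (hu : 0 ≤ u) (hv : 0 ≤ v) (huv : u + v = 1)
    (hx : 0 < x) (hy : 0 < y) : 0 < u * x + v * y := by
  rcases eq_or_lt_of_le hu with h | h
  · have hv1 : v = 1 := by linarith
    rw [← h, hv1]; nlinarith
  · nlinarith [mul_nonneg hv hy.le, mul_pos h hx]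

lemma quadA {a b c d : ℝ × ℝ} (hab : a ≠ b)
    (h1 : 0 < det2 c d a * det2 c d b) (h2 : 0 < det2 a b c * det2 a b d) :
    a ∉ convexHull ℝ ({b, c, d} : Set (ℝ × ℝ)) := by
  intro h
  obtain ⟨s, t, u, v, hs, ht, hst, hu, hv, huv, hx⟩ := mem_hull3 h
  have e : det2 a b (s • b + t • (u • c + v • d))
      = s * det2 a b b + t * (u * det2 a b c + v * det2 a b d) := by
    rw [det2_comb2 a b hst, det2_comb2 a b huv]
  rw [← hx, det2_aa, det2_ab] at e
  have hcd0 : u * det2 a b c + v * det2 a b d ≠ 0 := by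
    rcases mul_pos_iff.1 h2 with ⟨h3, h4⟩ | ⟨h3, h4⟩
    · exact (comb_pos hu hv huv h3 h4).ne'
    · have := comb_pos hu hv huv (neg_pos.2 h3) (neg_pos.2 h4)
      intro h'; nlinarith
  have ht0 : t = 0 := by
    rcases mul_eq_zero.1 (by linarith : t * (u * det2 a b c + v * det2 a b d) = 0) with h' | h'
    · exact h'
    · exact absurd h' hcd0
  apply hab
  rw [hx, ht0]
  have hs1 : s = 1 := by linarith
  rw [hs1]
  simp

lemma quadB {a b c d : ℝ × ℝ}
    (h1 : det2 c d a * det2 c d b < 0) :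
    a ∉ convexHull ℝ ({b, c, d} : Set (ℝ × ℝ)) := by
  intro h
  obtain ⟨s, t, u, v, hs, ht, hst, hu, hv, huv, hx⟩ := mem_hull3 h
  have e : det2 c d (s • b + t • (u • c + v • d))
      = s * det2 c d b + t * (u * det2 c d c + v * det2 c d d) := by
    rw [det2_comb2 c d hst, det2_comb2 c d huv]
  rw [← hx, det2_aa, det2_ab] at e
  have e2 : det2 c d a * det2 c d b = s * (det2 c d b) ^ 2 := by rw [e]; ring
  nlinarith [sq_nonneg (det2 c d b), mul_nonneg hs (sq_nonneg (det2 c d b))]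

lemma convexPos_quad {a b c d : ℝ × ℝ} (hab : a ≠ b) (hac : a ≠ c) (had : a ≠ d)
    (hbc : b ≠ c) (hbd : b ≠ d) (hcd : c ≠ d)
    (ha : a ∉ convexHull ℝ ({b, c, d} : Set (ℝ × ℝ)))
    (hb : b ∉ convexHull ℝ ({a, c, d} : Set (ℝ × ℝ)))
    (hc : c ∉ convexHull ℝ ({d, a, b} : Set (ℝ × ℝ)))
    (hd : d ∉ convexHull ℝ ({c, a, b} : Set (ℝ × ℝ))) :
    ConvexPos ({a, b, c, d} : Set (ℝ × ℝ)) := by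
  intro p hp
  rcases hp with rfl | rfl | rfl | rfl
  · have : ({p, b, c, d} : Set (ℝ × ℝ)) \ {p} = {b, c, d} := by
      ext x
      simp only [Set.mem_diff, Set.mem_insert_iff, Set.mem_singleton_iff]
      constructor
      · rintro ⟨rfl | h | h | h, hx⟩ <;> tauto
      · rintro (rfl | rfl | rfl) <;> exact ⟨by tauto, by intro h; subst h; tauto⟩
    rw [this]; exact ha
  · have : ({a, p, c, d} : Set (ℝ × ℝ)) \ {p} = {a, c, d} := by
      ext x
      simp only [Set.mem_diff, Set.mem_insert_iff, Set.mem_singleton_iff]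
      constructor
      · rintro ⟨rfl | h | h | h, hx⟩ <;> tauto
      · rintro (rfl | rfl | rfl) <;> exact ⟨by tauto, by intro h; subst h; tauto⟩
    rw [this]; exact hb
  · have : ({a, b, p, d} : Set (ℝ × ℝ)) \ {p} = {d, a, b} := by
      ext x
      simp only [Set.mem_diff, Set.mem_insert_iff, Set.mem_singleton_iff]
      constructor
      · rintro ⟨rfl | h | h | h, hx⟩ <;> tauto
      · rintro (rfl | rfl | rfl) <;> exact ⟨by tauto, by intro h; subst h; tauto⟩
    rw [this]; exact hc
  · have : ({a, b, c, p} : Set (ℝ × ℝ)) \ {p} = {c, a, b} := by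
      ext x
      simp only [Set.mem_diff, Set.mem_insert_iff, Set.mem_singleton_iff]
      constructor
      · rintro ⟨rfl | h | h | h, hx⟩ <;> tauto
      · rintro (rfl | rfl | rfl) <;> exact ⟨by tauto, by intro h; subst h; tauto⟩
    rw [this]; exact hd

lemma convA {a b c d : ℝ × ℝ} (hab : a ≠ b) (hac : a ≠ c) (had : a ≠ d)
    (hbc : b ≠ c) (hbd : b ≠ d) (hcd : c ≠ d)
    (h1 : 0 < det2 c d a * det2 c d b) (h2 : 0 < det2 a b c * det2 a b d) :
    ConvexPos ({a, b, c, d} : Set (ℝ × ℝ)) := by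
  refine convexPos_quad hab hac had hbc hbd hcd
    (quadA hab h1 h2) (quadA hab.symm ?_ ?_) (quadA hcd h2 h1) (quadA hcd.symm ?_ ?_)
  · rw [mul_comm]; exact h1
  · have e1 : det2 b a c = - det2 a b c := det2_swap a b c
    have e2 : det2 b a d = - det2 a b d := det2_swap a b d
    rw [e1, e2]; nlinarith
  · rw [mul_comm]; exact h2
  · have e1 : det2 d c a = - det2 c d a := det2_swap c d a
    have e2 : det2 d c b = - det2 c d b := det2_swap c d b
    rw [e1, e2]; nlinarith

lemma convB {a b c d : ℝ × ℝ} (hab : a ≠ b) (hac : a ≠ c) (had : a ≠ d)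
    (hbc : b ≠ c) (hbd : b ≠ d) (hcd : c ≠ d)
    (h1 : det2 c d a * det2 c d b < 0) (h2 : det2 a b c * det2 a b d < 0) :
    ConvexPos ({a, b, c, d} : Set (ℝ × ℝ)) := by
  refine convexPos_quad hab hac had hbc hbd hcd
    (quadB h1) (quadB ?_) (quadB h2) (quadB ?_)
  · rw [mul_comm]; exact h1
  · rw [mul_comm]; exact h2

def InTri (q a b c : ℝ × ℝ) : Prop :=
  ∃ α β γ : ℝ, 0 ≤ α ∧ 0 ≤ β ∧ 0 ≤ γ ∧ α + β + γ = 1 ∧ q = α • a + β • b + γ • c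

lemma prodeq {x y : ℝ × ℝ} (h1 : x.1 = y.1) (h2 : x.2 = y.2) : x = y := Prod.ext h1 h2

lemma comb_fst (α β γ : ℝ) (a b c : ℝ × ℝ) :
    (α • a + β • b + γ • c).1 = α * a.1 + β * b.1 + γ * c.1 := by
  simp [Prod.smul_fst, smul_eq_mul]
lemma comb_snd (α β γ : ℝ) (a b c : ℝ × ℝ) :
    (α • a + β • b + γ • c).2 = α * a.2 + β * b.2 + γ * c.2 := by
  simp [Prod.smul_snd, smul_eq_mul]

lemma intri_swap12 {q a b c : ℝ × ℝ} (h : InTri q a b c) : InTri q b a c := by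
  obtain ⟨α, β, γ, h1, h2, h3, h4, h5⟩ := h
  refine ⟨β, α, γ, h2, h1, h3, by linarith, ?_⟩
  rw [h5]
  apply prodeq <;> simp only [comb_fst, comb_snd] <;> ring

lemma intri_swap23 {q a b c : ℝ × ℝ} (h : InTri q a b c) : InTri q a c b := by
  obtain ⟨α, β, γ, h1, h2, h3, h4, h5⟩ := h
  refine ⟨α, γ, β, h1, h3, h2, by linarith, ?_⟩
  rw [h5]
  apply prodeq <;> simp only [comb_fst, comb_snd] <;> ring

lemma intri_rot {q a b c : ℝ × ℝ} (h : InTri q a b c) : InTri q b c a := by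
  obtain ⟨α, β, γ, h1, h2, h3, h4, h5⟩ := h
  refine ⟨β, γ, α, h2, h3, h1, by linarith, ?_⟩
  rw [h5]
  apply prodeq <;> simp only [comb_fst, comb_snd] <;> ring

lemma intri_trans {a b c q r : ℝ × ℝ} (har : InTri a b c r) (hq : InTri q a b c) :
    InTri q b c r := by
  obtain ⟨α, β, γ, h1, h2, h3, h4, h5⟩ := hq
  obtain ⟨α', β', γ', g1, g2, g3, g4, g5⟩ := har
  refine ⟨α * α' + β, α * β' + γ, α * γ', by nlinarith, by nlinarith, by nlinarith, by nlinarith, ?_⟩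
  rw [h5, g5]
  apply prodeq <;> simp only [comb_fst, comb_snd] <;> ring

lemma pairPos {x y z : ℝ} (hx : x ≠ 0) (hy : y ≠ 0) (hz : z ≠ 0) :
    0 < x * y ∨ 0 < x * z ∨ 0 < y * z := by
  rcases hx.lt_or_gt with h1 | h1 <;> rcases hy.lt_or_gt with h2 | h2 <;>
    rcases hz.lt_or_gt with h3 | h3 <;>
    first
      | exact Or.inl (by nlinarith)
      | exact Or.inr (Or.inl (by nlinarith))
      | exact Or.inr (Or.inr (by nlinarith))

lemma ncard4 {a b c d : ℝ × ℝ} (hab : a ≠ b) (hac : a ≠ c) (had : a ≠ d)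
    (hbc : b ≠ c) (hbd : b ≠ d) (hcd : c ≠ d) :
    ({a, b, c, d} : Set (ℝ × ℝ)).ncard = 4 := by
  rw [Set.ncard_insert_of_notMem (by simp [hab, hac, had]),
    Set.ncard_insert_of_notMem (by simp [hbc, hbd]), Set.ncard_pair hcd]

lemma inside_pair {a b c q r : ℝ × ℝ} (hab : a ≠ b) (haq : a ≠ q) (har : a ≠ r)
    (hbq : b ≠ q) (hbr : b ≠ r) (hqr : q ≠ r)
    (hq : InTri q a b c) (hr : InTri r a b c)
    (hfa : 0 < det2 q r a * det2 q r b)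
    (hgq : det2 a b q ≠ 0) (hgr : det2 a b r ≠ 0) :
    ConvexPos ({a, b, q, r} : Set (ℝ × ℝ)) := by
  obtain ⟨α, β, γ, h1, h2, h3, h4, h5⟩ := hq
  obtain ⟨α', β', γ', g1, g2, g3, g4, g5⟩ := hr
  have eq1 : det2 a b q = γ * det2 a b c := by
    rw [h5, det2_comb3 a b h4, det2_aa, det2_ab]; ring
  have eq2 : det2 a b r = γ' * det2 a b c := by
    rw [g5, det2_comb3 a b g4, det2_aa, det2_ab]; ring
  have hgc : det2 a b c ≠ 0 := by
    intro h0; rw [h0, mul_zero] at eq1; exact hgq eq1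
  have hγ : 0 < γ := by
    rcases eq_or_lt_of_le h3 with h | h
    · exfalso; apply hgq; rw [eq1, ← h]; ring
    · exact h
  have hγ' : 0 < γ' := by
    rcases eq_or_lt_of_le g3 with h | h
    · exfalso; apply hgr; rw [eq2, ← h]; ring
    · exact h
  have h2' : 0 < det2 a b q * det2 a b r := by
    rw [eq1, eq2]
    have : γ * det2 a b c * (γ' * det2 a b c) = γ * γ' * (det2 a b c) ^ 2 := by ring
    rw [this]
    exact mul_pos (mul_pos hγ hγ') (pow_two_pos_of_ne_zero hgc)
  exact convA hab haq har hbq hbr hqr hfa h2'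

lemma two_inside {a b c q r : ℝ × ℝ}
    (hab : a ≠ b) (hac : a ≠ c) (haq : a ≠ q) (har : a ≠ r)
    (hbc : b ≠ c) (hbq : b ≠ q) (hbr : b ≠ r)
    (hcq : c ≠ q) (hcr : c ≠ r) (hqr : q ≠ r)
    (H : ∀ x ∈ ({a, b, c, q, r} : Set (ℝ × ℝ)), ∀ y ∈ ({a, b, c, q, r} : Set (ℝ × ℝ)),
      ∀ z ∈ ({a, b, c, q, r} : Set (ℝ × ℝ)), x ≠ y → x ≠ z → y ≠ z → det2 x y z ≠ 0)
    (hq : InTri q a b c) (hr : InTri r a b c) :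
    ∃ T ⊆ ({a, b, c, q, r} : Set (ℝ × ℝ)), T.ncard = 4 ∧ ConvexPos T := by
  have ma : a ∈ ({a, b, c, q, r} : Set (ℝ × ℝ)) := by simp
  have mb : b ∈ ({a, b, c, q, r} : Set (ℝ × ℝ)) := by simp
  have mc : c ∈ ({a, b, c, q, r} : Set (ℝ × ℝ)) := by simp
  have mq : q ∈ ({a, b, c, q, r} : Set (ℝ × ℝ)) := by simp
  have mr : r ∈ ({a, b, c, q, r} : Set (ℝ × ℝ)) := by simp
  have hfa : det2 q r a ≠ 0 := H q mq r mr a ma hqr haq.symm har.symm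
  have hfb : det2 q r b ≠ 0 := H q mq r mr b mb hqr hbq.symm hbr.symm
  have hfc : det2 q r c ≠ 0 := H q mq r mr c mc hqr hcq.symm hcr.symm
  rcases pairPos hfa hfb hfc with h | h | h
  · refine ⟨{a, b, q, r}, by intro x hx; simp at hx ⊢; tauto,
      ncard4 hab haq har hbq hbr hqr, ?_⟩
    exact inside_pair hab haq har hbq hbr hqr hq hr h
      (H a ma b mb q mq hab haq hbq) (H a ma b mb r mr hab har hbr)
  · refine ⟨{a, c, q, r}, by intro x hx; simp at hx ⊢; tauto,
      ncard4 hac haq har hcq hcr hqr, ?_⟩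
    exact inside_pair hac haq har hcq hcr hqr (intri_swap23 hq) (intri_swap23 hr) h
      (H a ma c mc q mq hac haq hcq) (H a ma c mc r mr hac har hcr)
  · refine ⟨{b, c, q, r}, by intro x hx; simp at hx ⊢; tauto,
      ncard4 hbc hbq hbr hcq hcr hqr, ?_⟩
    exact inside_pair hbc hbq hbr hcq hcr hqr (intri_rot hq) (intri_rot hr) h
      (H b mb c mc q mq hbc hbq hcq) (H b mb c mc r mr hbc hbr hcr)

lemma det2_sum4 {w0 w1 w2 w3 : ℝ} {a b c d : ℝ × ℝ} (u v : ℝ × ℝ)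
    (e0 : w0 + w1 + w2 + w3 = 0)
    (e1 : w0 * a.1 + w1 * b.1 + w2 * c.1 + w3 * d.1 = 0)
    (e2 : w0 * a.2 + w1 * b.2 + w2 * c.2 + w3 * d.2 = 0) :
    w0 * det2 u v a + w1 * det2 u v b + w2 * det2 u v c + w3 * det2 u v d = 0 := by
  unfold det2
  linear_combination (v.1 - u.1) * e2 - (v.2 - u.2) * e1 +
    ((v.2 - u.2) * u.1 - (v.1 - u.1) * u.2) * e0

lemma helper31 {w0 w1 w2 w3 : ℝ} {m x y z : ℝ × ℝ}
    (hw0 : w0 < 0) (hw1 : 0 < w1) (hw2 : 0 < w2) (hw3 : 0 < w3)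
    (e0 : w0 + w1 + w2 + w3 = 0)
    (e1 : w0 * m.1 + w1 * x.1 + w2 * y.1 + w3 * z.1 = 0)
    (e2 : w0 * m.2 + w1 * x.2 + w2 * y.2 + w3 * z.2 = 0) :
    InTri m x y z := by
  have hpos : (0:ℝ) < -w0 := by linarith
  have hne : -w0 ≠ 0 := hpos.ne'
  refine ⟨w1 / (-w0), w2 / (-w0), w3 / (-w0), div_nonneg hw1.le hpos.le,
    div_nonneg hw2.le hpos.le, div_nonneg hw3.le hpos.le, ?_, ?_⟩
  · rw [← add_div, ← add_div, div_eq_one_iff_eq hne]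
    linarith
  · apply prodeq
    · rw [comb_fst, div_mul_eq_mul_div, div_mul_eq_mul_div, div_mul_eq_mul_div,
        ← add_div, ← add_div, eq_div_iff hne]
      linarith
    · rw [comb_snd, div_mul_eq_mul_div, div_mul_eq_mul_div, div_mul_eq_mul_div,
        ← add_div, ← add_div, eq_div_iff hne]
      linarith

lemma helper22 {w0 w1 w2 w3 : ℝ} {a b c d : ℝ × ℝ}
    (hab : a ≠ b) (hac : a ≠ c) (had : a ≠ d)
    (hbc : b ≠ c) (hbd : b ≠ d) (hcd : c ≠ d)
    (hw0 : 0 < w0) (hw1 : 0 < w1) (hw2 : w2 < 0) (hw3 : w3 < 0)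
    (e0 : w0 + w1 + w2 + w3 = 0)
    (e1 : w0 * a.1 + w1 * b.1 + w2 * c.1 + w3 * d.1 = 0)
    (e2 : w0 * a.2 + w1 * b.2 + w2 * c.2 + w3 * d.2 = 0)
    (hfa : det2 c d a ≠ 0) (hfb : det2 c d b ≠ 0)
    (hgc : det2 a b c ≠ 0) (hgd : det2 a b d ≠ 0) :
    ConvexPos ({a, b, c, d} : Set (ℝ × ℝ)) := by
  have s1 := det2_sum4 c d e0 e1 e2
  rw [det2_aa, det2_ab] at s1
  have key1 : w0 * det2 c d a = -(w1 * det2 c d b) := by linarith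
  have hne1 : w1 * det2 c d b ≠ 0 := mul_ne_zero hw1.ne' hfb
  have hq1 : (w0 * w1) * (det2 c d a * det2 c d b) = -(w1 * det2 c d b) ^ 2 := by
    linear_combination (w1 * det2 c d b) * key1
  have h1 : det2 c d a * det2 c d b < 0 := by
    nlinarith [mul_pos hw0 hw1, pow_two_pos_of_ne_zero hne1]
  have s2 := det2_sum4 a b e0 e1 e2
  rw [det2_aa, det2_ab] at s2
  have key2 : w2 * det2 a b c = -(w3 * det2 a b d) := by linarith
  have hne2 : w3 * det2 a b d ≠ 0 := mul_ne_zero hw3.ne hgd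
  have hq2 : (w2 * w3) * (det2 a b c * det2 a b d) = -(w3 * det2 a b d) ^ 2 := by
    linear_combination (w3 * det2 a b d) * key2
  have h2 : det2 a b c * det2 a b d < 0 := by
    nlinarith [mul_pos_of_neg_of_neg hw2 hw3, pow_two_pos_of_ne_zero hne2]
  exact convB hab hac had hbc hbd hcd h1 h2

lemma radon4 {a b c d : ℝ × ℝ}
    (hab : a ≠ b) (hac : a ≠ c) (had : a ≠ d)
    (hbc : b ≠ c) (hbd : b ≠ d) (hcd : c ≠ d)
    (H : ∀ x ∈ ({a, b, c, d} : Set (ℝ × ℝ)), ∀ y ∈ ({a, b, c, d} : Set (ℝ × ℝ)),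
      ∀ z ∈ ({a, b, c, d} : Set (ℝ × ℝ)), x ≠ y → x ≠ z → y ≠ z → det2 x y z ≠ 0) :
    ConvexPos ({a, b, c, d} : Set (ℝ × ℝ)) ∨
      InTri a b c d ∨ InTri b a c d ∨ InTri c a b d ∨ InTri d a b c := by
  have ma : a ∈ ({a, b, c, d} : Set (ℝ × ℝ)) := by simp
  have mb : b ∈ ({a, b, c, d} : Set (ℝ × ℝ)) := by simp
  have mc : c ∈ ({a, b, c, d} : Set (ℝ × ℝ)) := by simp
  have md : d ∈ ({a, b, c, d} : Set (ℝ × ℝ)) := by simp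
  set w0 : ℝ := det2 b c d with hw0def
  set w1 : ℝ := -det2 a c d with hw1def
  set w2 : ℝ := det2 a b d with hw2def
  set w3 : ℝ := -det2 a b c with hw3def
  have e0 : w0 + w1 + w2 + w3 = 0 := by rw [hw0def, hw1def, hw2def, hw3def]; unfold det2; ring
  have e1 : w0 * a.1 + w1 * b.1 + w2 * c.1 + w3 * d.1 = 0 := by
    rw [hw0def, hw1def, hw2def, hw3def]; unfold det2; ring
  have e2 : w0 * a.2 + w1 * b.2 + w2 * c.2 + w3 * d.2 = 0 := by
    rw [hw0def, hw1def, hw2def, hw3def]; unfold det2; ring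
  have n0 : w0 ≠ 0 := H b mb c mc d md hbc hbd hcd
  have n1 : w1 ≠ 0 := neg_ne_zero.2 (H a ma c mc d md hac had hcd)
  have n2 : w2 ≠ 0 := H a ma b mb d md hab had hbd
  have n3 : w3 ≠ 0 := neg_ne_zero.2 (H a ma b mb c mc hab hac hbc)
  rcases n0.lt_or_gt with s0 | s0 <;> rcases n1.lt_or_gt with s1 | s1 <;>
    rcases n2.lt_or_gt with s2 | s2 <;> rcases n3.lt_or_gt with s3 | s3
  -- (-,-,-,-)
  · exact absurd e0 (by intro h; linarith)
  -- (-,-,-,+)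
  · exact Or.inr (Or.inr (Or.inr (Or.inr (helper31 (m := d) (x := a) (y := b) (z := c)
      (by linarith : -w3 < 0) (by linarith : (0:ℝ) < -w0) (by linarith : (0:ℝ) < -w1) (by linarith : (0:ℝ) < -w2)
      (by linear_combination -e0) (by linear_combination -e1) (by linear_combination -e2)))))
  -- (-,-,+,-)
  · exact Or.inr (Or.inr (Or.inr (Or.inl (helper31 (m := c) (x := a) (y := b) (z := d)
      (by linarith : -w2 < 0) (by linarith : (0:ℝ) < -w0) (by linarith : (0:ℝ) < -w1) (by linarith : (0:ℝ) < -w3)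
      (by linear_combination -e0) (by linear_combination -e1) (by linear_combination -e2)))))
  -- (-,-,+,+)
  · have res := helper22 (a := c) (b := d) (c := a) (d := b)
      hcd hac.symm hbc.symm had.symm hbd.symm hab
      s2 s3 s0 s1 (by linear_combination e0) (by linear_combination e1) (by linear_combination e2)
      (H a ma b mb c mc hab hac hbc) (H a ma b mb d md hab had hbd) (H c mc d md a ma hcd hac.symm had.symm) (H c mc d md b mb hcd hbc.symm hbd.symm)
    have hset : ({c, d, a, b} : Set (ℝ × ℝ)) = {a, b, c, d} := by ext x; simp; tauto
    exact Or.inl (hset ▸ res)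
  -- (-,+,-,-)
  · exact Or.inr (Or.inr (Or.inl (helper31 (m := b) (x := a) (y := c) (z := d)
      (by linarith : -w1 < 0) (by linarith : (0:ℝ) < -w0) (by linarith : (0:ℝ) < -w2) (by linarith : (0:ℝ) < -w3)
      (by linear_combination -e0) (by linear_combination -e1) (by linear_combination -e2))))
  -- (-,+,-,+)
  · have res := helper22 (a := b) (b := d) (c := a) (d := c)
      hbd hab.symm hbc had.symm hcd.symm hac
      s1 s3 s0 s2 (by linear_combination e0) (by linear_combination e1) (by linear_combination e2)
      (H a ma c mc b mb hac hab hbc.symm) (H a ma c mc d md hac had hcd) (H b mb d md a ma hbd hab.symm had.symm) (H b mb d md c mc hbd hbc hcd.symm)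
    have hset : ({b, d, a, c} : Set (ℝ × ℝ)) = {a, b, c, d} := by ext x; simp; tauto
    exact Or.inl (hset ▸ res)
  -- (-,+,+,-)
  · have res := helper22 (a := b) (b := c) (c := a) (d := d)
      hbc hab.symm hbd hac.symm hcd had
      s1 s2 s0 s3 (by linear_combination e0) (by linear_combination e1) (by linear_combination e2)
      (H a ma d md b mb had hab hbd.symm) (H a ma d md c mc had hac hcd.symm) (H b mb c mc a ma hbc hab.symm hac.symm) (H b mb c mc d md hbc hbd hcd)
    have hset : ({b, c, a, d} : Set (ℝ × ℝ)) = {a, b, c, d} := by ext x; simp; tauto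
    exact Or.inl (hset ▸ res)
  -- (-,+,+,+)
  · exact Or.inr (Or.inl (helper31 (m := a) (x := b) (y := c) (z := d)
      (s0 : w0 < 0) s1 s2 s3
      (by linear_combination e0) (by linear_combination e1) (by linear_combination e2)))
  -- (+,-,-,-)
  · exact Or.inr (Or.inl (helper31 (m := a) (x := b) (y := c) (z := d)
      (by linarith : -w0 < 0) (by linarith : (0:ℝ) < -w1) (by linarith : (0:ℝ) < -w2) (by linarith : (0:ℝ) < -w3)
      (by linear_combination -e0) (by linear_combination -e1) (by linear_combination -e2)))
  -- (+,-,-,+)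
  · have res := helper22 (a := a) (b := d) (c := b) (d := c)
      had hab hac hbd.symm hcd.symm hbc
      s0 s3 s1 s2 (by linear_combination e0) (by linear_combination e1) (by linear_combination e2)
      (H b mb c mc a ma hbc hab.symm hac.symm) (H b mb c mc d md hbc hbd hcd) (H a ma d md b mb had hab hbd.symm) (H a ma d md c mc had hac hcd.symm)
    have hset : ({a, d, b, c} : Set (ℝ × ℝ)) = {a, b, c, d} := by ext x; simp; tauto
    exact Or.inl (hset ▸ res)
  -- (+,-,+,-)
  · have res := helper22 (a := a) (b := c) (c := b) (d := d)
      hac hab had hbc.symm hcd hbd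
      s0 s2 s1 s3 (by linear_combination e0) (by linear_combination e1) (by linear_combination e2)
      (H b mb d md a ma hbd hab.symm had.symm) (H b mb d md c mc hbd hbc hcd.symm) (H a ma c mc b mb hac hab hbc.symm) (H a ma c mc d md hac had hcd)
    have hset : ({a, c, b, d} : Set (ℝ × ℝ)) = {a, b, c, d} := by ext x; simp; tauto
    exact Or.inl (hset ▸ res)
  -- (+,-,+,+)
  · exact Or.inr (Or.inr (Or.inl (helper31 (m := b) (x := a) (y := c) (z := d)
      (s1 : w1 < 0) s0 s2 s3
      (by linear_combination e0) (by linear_combination e1) (by linear_combination e2))))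
  -- (+,+,-,-)
  · have res := helper22 (a := a) (b := b) (c := c) (d := d)
      hab hac had hbc hbd hcd
      s0 s1 s2 s3 (by linear_combination e0) (by linear_combination e1) (by linear_combination e2)
      (H c mc d md a ma hcd hac.symm had.symm) (H c mc d md b mb hcd hbc.symm hbd.symm) (H a ma b mb c mc hab hac hbc) (H a ma b mb d md hab had hbd)
    have hset : ({a, b, c, d} : Set (ℝ × ℝ)) = {a, b, c, d} := rfl
    exact Or.inl (hset ▸ res)
  -- (+,+,-,+)
  · exact Or.inr (Or.inr (Or.inr (Or.inl (helper31 (m := c) (x := a) (y := b) (z := d)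
      (s2 : w2 < 0) s0 s1 s3
      (by linear_combination e0) (by linear_combination e1) (by linear_combination e2)))))
  -- (+,+,+,-)
  · exact Or.inr (Or.inr (Or.inr (Or.inr (helper31 (m := d) (x := a) (y := b) (z := c)
      (s3 : w3 < 0) s0 s1 s2
      (by linear_combination e0) (by linear_combination e1) (by linear_combination e2)))))
  -- (+,+,+,+)
  · exact absurd e0 (by intro h; linarith)

lemma step2 {t1 t2 t3 q r : ℝ × ℝ}
    (h12 : t1 ≠ t2) (h13 : t1 ≠ t3) (h1q : t1 ≠ q) (h1r : t1 ≠ r)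
    (h23 : t2 ≠ t3) (h2q : t2 ≠ q) (h2r : t2 ≠ r)
    (h3q : t3 ≠ q) (h3r : t3 ≠ r) (hqr : q ≠ r)
    (H : ∀ x ∈ ({t1, t2, t3, q, r} : Set (ℝ × ℝ)), ∀ y ∈ ({t1, t2, t3, q, r} : Set (ℝ × ℝ)),
      ∀ z ∈ ({t1, t2, t3, q, r} : Set (ℝ × ℝ)), x ≠ y → x ≠ z → y ≠ z → det2 x y z ≠ 0)
    (hq : InTri q t1 t2 t3) :
    ∃ T ⊆ ({t1, t2, t3, q, r} : Set (ℝ × ℝ)), T.ncard = 4 ∧ ConvexPos T := by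
  have hsub4 : ({t1, t2, t3, r} : Set (ℝ × ℝ)) ⊆ {t1, t2, t3, q, r} := by
    intro x hx; simp at hx ⊢; tauto
  have H4 : ∀ x ∈ ({t1, t2, t3, r} : Set (ℝ × ℝ)), ∀ y ∈ ({t1, t2, t3, r} : Set (ℝ × ℝ)),
      ∀ z ∈ ({t1, t2, t3, r} : Set (ℝ × ℝ)), x ≠ y → x ≠ z → y ≠ z → det2 x y z ≠ 0 :=
    fun x hx y hy z hz => H x (hsub4 hx) y (hsub4 hy) z (hsub4 hz)
  rcases radon4 h12 h13 h1r h23 h2r h3r H4 with hcv | h1 | h2 | h3 | hrr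
  · exact ⟨{t1, t2, t3, r}, hsub4, ncard4 h12 h13 h1r h23 h2r h3r, hcv⟩
  · -- t1 inside (t2,t3,r); q also lands inside (t2,t3,r)
    have hq' : InTri q t2 t3 r := intri_trans h1 hq
    have hsub : ({t2, t3, r, q, t1} : Set (ℝ × ℝ)) ⊆ {t1, t2, t3, q, r} := by
      intro x hx; simp at hx ⊢; tauto
    obtain ⟨T, hT1, hT2, hT3⟩ := two_inside h23 h2r h2q h12.symm h3r h3q h13.symm
      hqr.symm h1r.symm h1q.symm
      (fun x hx y hy z hz => H x (hsub hx) y (hsub hy) z (hsub hz)) hq'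
      (intri_trans h1 ⟨1, 0, 0, by norm_num, le_refl 0, le_refl 0, by norm_num, by simp⟩)
    exact ⟨T, hT1.trans hsub, hT2, hT3⟩
  · have hq' : InTri q t1 t3 r := intri_trans h2 (intri_swap12 hq)
    have hsub : ({t1, t3, r, q, t2} : Set (ℝ × ℝ)) ⊆ {t1, t2, t3, q, r} := by
      intro x hx; simp at hx ⊢; tauto
    obtain ⟨T, hT1, hT2, hT3⟩ := two_inside h13 h1r h1q h12 h3r h3q h23.symm
      hqr.symm h2r.symm h2q.symm
      (fun x hx y hy z hz => H x (hsub hx) y (hsub hy) z (hsub hz)) hq'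
      (intri_trans h2 ⟨1, 0, 0, by norm_num, le_refl 0, le_refl 0, by norm_num, by simp⟩)
    exact ⟨T, hT1.trans hsub, hT2, hT3⟩
  · have hq' : InTri q t1 t2 r := intri_trans h3 (intri_rot (intri_rot hq))
    have hsub : ({t1, t2, r, q, t3} : Set (ℝ × ℝ)) ⊆ {t1, t2, t3, q, r} := by
      intro x hx; simp at hx ⊢; tauto
    obtain ⟨T, hT1, hT2, hT3⟩ := two_inside h12 h1r h1q h13 h2r h2q h23
      hqr.symm h3r.symm h3q.symm
      (fun x hx y hy z hz => H x (hsub hx) y (hsub hy) z (hsub hz)) hq'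
      (intri_trans h3 ⟨1, 0, 0, by norm_num, le_refl 0, le_refl 0, by norm_num, by simp⟩)
    exact ⟨T, hT1.trans hsub, hT2, hT3⟩
  · exact two_inside h12 h13 h1q h1r h23 h2q h2r h3q h3r hqr H hq hrr

lemma main5 {p1 p2 p3 p4 p5 : ℝ × ℝ}
    (h12 : p1 ≠ p2) (h13 : p1 ≠ p3) (h14 : p1 ≠ p4) (h15 : p1 ≠ p5)
    (h23 : p2 ≠ p3) (h24 : p2 ≠ p4) (h25 : p2 ≠ p5)
    (h34 : p3 ≠ p4) (h35 : p3 ≠ p5) (h45 : p4 ≠ p5)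
    (H : ∀ x ∈ ({p1, p2, p3, p4, p5} : Set (ℝ × ℝ)),
      ∀ y ∈ ({p1, p2, p3, p4, p5} : Set (ℝ × ℝ)),
      ∀ z ∈ ({p1, p2, p3, p4, p5} : Set (ℝ × ℝ)),
      x ≠ y → x ≠ z → y ≠ z → det2 x y z ≠ 0) :
    ∃ T ⊆ ({p1, p2, p3, p4, p5} : Set (ℝ × ℝ)), T.ncard = 4 ∧ ConvexPos T := by
  have hsub4 : ({p1, p2, p3, p4} : Set (ℝ × ℝ)) ⊆ {p1, p2, p3, p4, p5} := by
    intro x hx; simp at hx ⊢; tauto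
  have H4 : ∀ x ∈ ({p1, p2, p3, p4} : Set (ℝ × ℝ)), ∀ y ∈ ({p1, p2, p3, p4} : Set (ℝ × ℝ)),
      ∀ z ∈ ({p1, p2, p3, p4} : Set (ℝ × ℝ)), x ≠ y → x ≠ z → y ≠ z → det2 x y z ≠ 0 :=
    fun x hx y hy z hz => H x (hsub4 hx) y (hsub4 hy) z (hsub4 hz)
  rcases radon4 h12 h13 h14 h23 h24 h34 H4 with hcv | h1 | h2 | h3 | h4
  · exact ⟨{p1, p2, p3, p4}, hsub4, ncard4 h12 h13 h14 h23 h24 h34, hcv⟩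
  · have hsub : ({p2, p3, p4, p1, p5} : Set (ℝ × ℝ)) ⊆ {p1, p2, p3, p4, p5} := by
      intro x hx; simp at hx ⊢; tauto
    obtain ⟨T, hT1, hT2, hT3⟩ := step2 h23 h24 h12.symm h25 h34 h13.symm h35 h14.symm h45 h15
      (fun x hx y hy z hz => H x (hsub hx) y (hsub hy) z (hsub hz)) h1
    exact ⟨T, hT1.trans hsub, hT2, hT3⟩
  · have hsub : ({p1, p3, p4, p2, p5} : Set (ℝ × ℝ)) ⊆ {p1, p2, p3, p4, p5} := by
      intro x hx; simp at hx ⊢; tauto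
    obtain ⟨T, hT1, hT2, hT3⟩ := step2 h13 h14 h12 h15 h34 h23.symm h35 h24.symm h45 h25
      (fun x hx y hy z hz => H x (hsub hx) y (hsub hy) z (hsub hz)) h2
    exact ⟨T, hT1.trans hsub, hT2, hT3⟩
  · have hsub : ({p1, p2, p4, p3, p5} : Set (ℝ × ℝ)) ⊆ {p1, p2, p3, p4, p5} := by
      intro x hx; simp at hx ⊢; tauto
    obtain ⟨T, hT1, hT2, hT3⟩ := step2 h12 h14 h13 h15 h24 h23 h25 h34.symm h45 h35
      (fun x hx y hy z hz => H x (hsub hx) y (hsub hy) z (hsub hz)) h3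
    exact ⟨T, hT1.trans hsub, hT2, hT3⟩
  · obtain ⟨T, hT1, hT2, hT3⟩ := step2 h12 h13 h14 h15 h23 h24 h25 h34 h35 h45 H h4
    exact ⟨T, hT1, hT2, hT3⟩

lemma part1 : ∀ S : Set (ℝ × ℝ), S.Finite → S.ncard = 5 → GenPos S → HasConvex S 4 := by
  intro S hfin hcard hgp
  obtain ⟨p1, T1, hn1, rfl, hc1⟩ := Set.eq_insert_of_ncard_eq_succ hcard
  obtain ⟨p2, T2, hn2, rfl, hc2⟩ := Set.eq_insert_of_ncard_eq_succ hc1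
  obtain ⟨p3, T3, hn3, rfl, hc3⟩ := Set.eq_insert_of_ncard_eq_succ hc2
  obtain ⟨p4, T4, hn4, rfl, hc4⟩ := Set.eq_insert_of_ncard_eq_succ hc3
  obtain ⟨p5, rfl⟩ := Set.ncard_eq_one.1 hc4
  simp only [Set.mem_insert_iff, Set.mem_singleton_iff, not_or] at hn1 hn2 hn3 hn4
  obtain ⟨h12, h13, h14, h15⟩ := hn1
  obtain ⟨h23, h24, h25⟩ := hn2
  obtain ⟨h34, h35⟩ := hn3
  have h45 : p4 ≠ p5 := hn4
  have H : ∀ x ∈ ({p1, p2, p3, p4, p5} : Set (ℝ × ℝ)),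
      ∀ y ∈ ({p1, p2, p3, p4, p5} : Set (ℝ × ℝ)),
      ∀ z ∈ ({p1, p2, p3, p4, p5} : Set (ℝ × ℝ)),
      x ≠ y → x ≠ z → y ≠ z → det2 x y z ≠ 0 :=
    fun x hx y hy z hz hxy hxz hyz h0 =>
      hgp x hx y hy z hz hxy hxz hyz (collinear_of_det2 h0)
  obtain ⟨T, h1, h2, h3⟩ := main5 h12 h13 h14 h15 h23 h24 h25 h34 h35 h45 H
  exact ⟨T, h1, h2, h3⟩

def S0 : Set (ℝ × ℝ) := {(0, 0), (3, 0), (0, 3), (1, 1)}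

lemma S0_genpos : GenPos S0 := by
  intro a ha b hb c hc hab hac hbc hcol
  have hd := det2_of_collinear hcol
  simp only [S0, Set.mem_insert_iff, Set.mem_singleton_iff] at ha hb hc
  rcases ha with rfl | rfl | rfl | rfl <;> rcases hb with rfl | rfl | rfl | rfl <;>
    rcases hc with rfl | rfl | rfl | rfl <;>
    first
      | exact hab rfl
      | exact hac rfl
      | exact hbc rfl
      | norm_num [det2] at hd

lemma S0_ncard : S0.ncard = 4 := by
  rw [S0]
  rw [Set.ncard_insert_of_notMem (by norm_num [Prod.ext_iff]),
    Set.ncard_insert_of_notMem (by norm_num [Prod.ext_iff]),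
    Set.ncard_pair (by norm_num [Prod.ext_iff])]

lemma S0_finite : S0.Finite := by unfold S0; exact Set.toFinite _

lemma S0_not_hasconvex : ¬ HasConvex S0 4 := by
  rintro ⟨T, hsub, hcard, hconv⟩
  have hTS : T = S0 := Set.eq_of_subset_of_ncard_le hsub (by rw [hcard, S0_ncard]) S0_finite
  subst hTS
  have hmem11 : ((1 : ℝ), (1 : ℝ)) ∈ S0 := by rw [S0]; simp
  apply hconv (1, 1) hmem11
  have hdiff : S0 \ {((1:ℝ), (1:ℝ))}
      = ({((0:ℝ), (0:ℝ)), ((3:ℝ), (0:ℝ)), ((0:ℝ), (3:ℝ))} : Set (ℝ × ℝ)) := by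
    ext x
    simp only [S0, Set.mem_diff, Set.mem_insert_iff, Set.mem_singleton_iff]
    constructor
    · rintro ⟨h | h | h | h, hne⟩
      · exact Or.inl h
      · exact Or.inr (Or.inl h)
      · exact Or.inr (Or.inr h)
      · exact absurd h hne
    · rintro (rfl | rfl | rfl) <;> norm_num [Prod.ext_iff]
  rw [hdiff]
  have hy : ((3/2 : ℝ), (3/2 : ℝ)) ∈ convexHull ℝ ({((3:ℝ), (0:ℝ)), ((0:ℝ), (3:ℝ))} : Set (ℝ × ℝ)) := by
    rw [convexHull_pair]
    refine ⟨1/2, 1/2, by norm_num, by norm_num, by norm_num, ?_⟩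
    norm_num [Prod.smul_mk, Prod.mk_add_mk, Prod.ext_iff]
  have hy' : ((3/2 : ℝ), (3/2 : ℝ))
      ∈ convexHull ℝ ({((0:ℝ), (0:ℝ)), ((3:ℝ), (0:ℝ)), ((0:ℝ), (3:ℝ))} : Set (ℝ × ℝ)) := by
    apply convexHull_mono (by intro x hx; simp at hx ⊢; tauto) hy
  have h00 : ((0:ℝ), (0:ℝ))
      ∈ convexHull ℝ ({((0:ℝ), (0:ℝ)), ((3:ℝ), (0:ℝ)), ((0:ℝ), (3:ℝ))} : Set (ℝ × ℝ)) :=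
    subset_convexHull ℝ _ (by simp)
  have hseg : ((1:ℝ), (1:ℝ)) ∈ segment ℝ ((0:ℝ), (0:ℝ)) ((3/2 : ℝ), (3/2 : ℝ)) := by
    refine ⟨1/3, 2/3, by norm_num, by norm_num, by norm_num, ?_⟩
    norm_num [Prod.smul_mk, Prod.mk_add_mk, Prod.ext_iff]
  exact (convex_convexHull ℝ _).segment_subset h00 hy' hseg

lemma part2 : ES 4 = 5 := by
  have mem5 : 5 ∈ {N : ℕ | ∀ S : Set (ℝ × ℝ), S.Finite → N ≤ S.ncard → GenPos S → HasConvex S 4} := by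
    intro S hfin hle hgp
    obtain ⟨t, hts, htc⟩ := Set.exists_subset_card_eq hle
    obtain ⟨T, hT1, hT2, hT3⟩ := part1 t (hfin.subset hts) htc
      (fun a ha b hb c hc => hgp a (hts ha) b (hts hb) c (hts hc))
    exact ⟨T, hT1.trans hts, hT2, hT3⟩
  have lower : ∀ N ∈ {N : ℕ | ∀ S : Set (ℝ × ℝ), S.Finite → N ≤ S.ncard → GenPos S → HasConvex S 4},
      5 ≤ N := by
    intro N hN
    by_contra hlt
    push_neg at hlt
    exact S0_not_hasconvex (hN S0 S0_finite (by rw [S0_ncard]; omega) S0_genpos)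
  exact le_antisymm (Nat.sInf_le mem5) (le_csInf ⟨5, mem5⟩ lower)


theorem stmt_11 :
    (∀ S : Set (ℝ × ℝ), S.Finite → S.ncard = 5 → GenPos S → HasConvex S 4) ∧
    ES 4 = 5 := ⟨part1, part2⟩
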